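/- arXiv:2507.09284 — 4 statements merged into one kernel-verified Lean document; each statement's English description precedes it below -/
import Mathlib

section
/- The linear map T : ℓ₁² → ℓ₁² defined by T(a, b) = (−3a + b)·(1, 0) preserves parallel pairs but does not preserve TEA pairs: the vectors (0,1) and (1,1) form a TEA pair in ℓ₁², but T(0,1) = (1,0) and T(1,1) = (−2,0) do not form a TEA pair. -/
set_option maxHeartbeats 1000000

lemma l1_norm (a b : ℝ) : ‖(WithLp.equiv 1 (Fin 2 → ℝ)).symm ![a, b]‖ = |a| + |b| := by
  rw [PiLp.norm_eq_sum (by norm_num)]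
  simp [Fin.sum_univ_two, Real.rpow_one, abs_eq_self.mpr]

lemma real_mu (c d : ℝ) : ∃ μ : ℝ, ‖μ‖ = 1 ∧ |c + μ * d| = |c| + |d| := by
  rcases le_total 0 (c * d) with h | h
  · refine ⟨1, by simp, ?_⟩
    rcases abs_cases c with ⟨h1, _⟩ | ⟨h1, _⟩ <;> rcases abs_cases d with ⟨h2, _⟩ | ⟨h2, _⟩ <;>
      rcases abs_cases (c + 1 * d) with ⟨h3, _⟩ | ⟨h3, _⟩ <;> nlinarith
  · refine ⟨-1, by simp, ?_⟩
    rcases abs_cases c with ⟨h1, _⟩ | ⟨h1, _⟩ <;> rcases abs_cases d with ⟨h2, _⟩ | ⟨h2, _⟩ <;>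
      rcases abs_cases (c + -1 * d) with ⟨h3, _⟩ | ⟨h3, _⟩ <;> nlinarith

/-- The map `T(a,b) = (-3a+b)·(1,0)` on `ℓ₁²` preserves parallel pairs, while
`(0,1),(1,1)` form a TEA pair but their images `(1,0),(-2,0)` do not. -/
theorem rank_one_example_l1 (T : PiLp 1 (fun _ : Fin 2 => ℝ) →ₗ[ℝ] PiLp 1 (fun _ : Fin 2 => ℝ))
    (hT : ∀ v : PiLp 1 (fun _ : Fin 2 => ℝ),
      T v = (-3 * (WithLp.equiv 1 (Fin 2 → ℝ) v 0) + (WithLp.equiv 1 (Fin 2 → ℝ) v 1)) •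
        (WithLp.equiv 1 (Fin 2 → ℝ)).symm ![1, 0]) :
    (∀ x y : PiLp 1 (fun _ : Fin 2 => ℝ),
        (∃ l : ℝ, ‖l‖ = 1 ∧ ‖x + l • y‖ = ‖x‖ + ‖y‖) →
        (∃ μ : ℝ, ‖μ‖ = 1 ∧ ‖T x + μ • T y‖ = ‖T x‖ + ‖T y‖)) ∧
    (‖(WithLp.equiv 1 (Fin 2 → ℝ)).symm ![0, 1] + (WithLp.equiv 1 (Fin 2 → ℝ)).symm ![1, 1]‖ =
      ‖(WithLp.equiv 1 (Fin 2 → ℝ)).symm ![(0 : ℝ), 1]‖ +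
        ‖(WithLp.equiv 1 (Fin 2 → ℝ)).symm ![(1 : ℝ), 1]‖) ∧
    (‖T ((WithLp.equiv 1 (Fin 2 → ℝ)).symm ![0, 1]) + T ((WithLp.equiv 1 (Fin 2 → ℝ)).symm ![1, 1])‖ ≠
      ‖T ((WithLp.equiv 1 (Fin 2 → ℝ)).symm ![0, 1])‖ +
        ‖T ((WithLp.equiv 1 (Fin 2 → ℝ)).symm ![1, 1])‖) := by
  have hene : ‖(WithLp.equiv 1 (Fin 2 → ℝ)).symm ![(1:ℝ), 0]‖ = 1 := by
    rw [l1_norm]; norm_num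
  refine ⟨?_, ?_, ?_⟩
  · intro x y _
    set c : ℝ := -3 * (WithLp.equiv 1 (Fin 2 → ℝ) x 0) + (WithLp.equiv 1 (Fin 2 → ℝ) x 1) with hc
    set d : ℝ := -3 * (WithLp.equiv 1 (Fin 2 → ℝ) y 0) + (WithLp.equiv 1 (Fin 2 → ℝ) y 1) with hd
    obtain ⟨μ, hμ, hμ2⟩ := real_mu c d
    refine ⟨μ, hμ, ?_⟩
    rw [hT x, hT y, ← hc, ← hd, smul_smul, ← add_smul, norm_smul, norm_smul, norm_smul, hene,
      mul_one, mul_one, mul_one, Real.norm_eq_abs, Real.norm_eq_abs, Real.norm_eq_abs, hμ2]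
  · have : (WithLp.equiv 1 (Fin 2 → ℝ)).symm ![(0:ℝ), 1] + (WithLp.equiv 1 (Fin 2 → ℝ)).symm ![(1:ℝ), 1]
        = (WithLp.equiv 1 (Fin 2 → ℝ)).symm ![(1:ℝ), 2] := by
      apply (WithLp.equiv 1 (Fin 2 → ℝ)).injective
      simp only [WithLp.equiv_apply, WithLp.equiv_symm_apply, WithLp.ofLp_add, WithLp.ofLp_toLp]
      ext i
      fin_cases i <;> norm_num
    rw [this, l1_norm, l1_norm, l1_norm]; norm_num
  · rw [hT, hT]
    simp only [Equiv.apply_symm_apply, Matrix.cons_val_zero, Matrix.cons_val_one, Matrix.head_cons]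
    rw [← add_smul, norm_smul, norm_smul, norm_smul, hene, mul_one, mul_one, mul_one]
    norm_num
end

section
/- Let X be a separable Banach space in which every pair of vectors is parallel, i.e., for all x, y ∈ X there exists a unimodular scalar λ with ‖x + λy‖ = ‖x‖ + ‖y‖. Then dim(X) ≤ 1. -/
open RCLike Filter Topology

/-- In a finite-dimensional normed space over an `RCLike` field in which all pairs of
vectors are parallel, there is a linear functional realizing the norm. -/
lemma exists_isometric_functional {𝕜 E : Type*} [RCLike 𝕜] [NormedAddCommGroup E]
    [NormedSpace ℝ E] [NormedSpace 𝕜 E] [IsScalarTower ℝ 𝕜 E] [FiniteDimensional ℝ E]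
    (h : ∀ x y : E, ∃ l : 𝕜, ‖l‖ = 1 ∧ ‖x + l • y‖ = ‖x‖ + ‖y‖) :
    ∃ F : E →L[𝕜] 𝕜, ∀ y : E, ‖F y‖ = ‖y‖ := by
  rcases subsingleton_or_nontrivial E with hE | hE
  · exact ⟨0, fun y => by simp [Subsingleton.elim y 0]⟩
  -- get a nonzero point of differentiability of the norm
  obtain ⟨x, hx0, hx⟩ : ∃ x : E, x ≠ 0 ∧ DifferentiableAt ℝ (‖·‖) x := by
    obtain ⟨y, hy⟩ := exists_ne (0 : E)
    obtain ⟨x, hx1, hx2⟩ := (dense_differentiableAt_norm (E := E)).exists_mem_open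
      isOpen_compl_singleton ⟨y, hy⟩
    exact ⟨x, hx2, hx1⟩
  set f : E →L[ℝ] ℝ := fderiv ℝ (fun y : E => ‖y‖) x with hf
  have hfd : HasFDerivAt (fun y : E => ‖y‖) f x := hx.hasFDerivAt
  -- the norm has a directional derivative `f v` at `x` in every direction
  have hline : ∀ v : E, HasDerivAt (fun t : ℝ => ‖x + t • v‖) (f v) 0 := by
    intro v
    have h1 : HasDerivAt (fun t : ℝ => x + t • v) v 0 := by
      simpa using ((hasDerivAt_id (0 : ℝ)).smul_const v).const_add x
    have hfd' : HasFDerivAt (fun y : E => ‖y‖) f (x + (0 : ℝ) • v) := by simpa using hfd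
    exact hfd'.comp_hasDerivAt 0 h1
  have key : ∀ v : E, Tendsto (fun t : ℝ => (‖x + t • v‖ - ‖x‖) / t)
      (𝓝[>] (0 : ℝ)) (𝓝 (f v)) := by
    intro v
    have h2 := hasDerivAt_iff_tendsto_slope.1 (hline v)
    have h3 : Tendsto (slope (fun t : ℝ => ‖x + t • v‖) 0) (𝓝[>] (0 : ℝ)) (𝓝 (f v)) :=
      h2.mono_left (nhdsWithin_mono _ fun t ht => ne_of_gt ht)
    refine Filter.Tendsto.congr' ?_ h3
    filter_upwards [self_mem_nhdsWithin] with t ht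
    simp [slope_def_field]
  -- `f` is dominated by the norm
  have fle : ∀ v : E, f v ≤ ‖v‖ := by
    intro v
    refine le_of_tendsto (key v) ?_
    filter_upwards [self_mem_nhdsWithin] with t (ht : (0 : ℝ) < t)
    rw [div_le_iff₀ ht]
    have h1 : ‖x + t • v‖ ≤ ‖x‖ + t * ‖v‖ := by
      calc ‖x + t • v‖ ≤ ‖x‖ + ‖t • v‖ := norm_add_le _ _
        _ = ‖x‖ + t * ‖v‖ := by rw [norm_smul, Real.norm_eq_abs, abs_of_pos ht]
    linarith
  -- uniqueness of the supporting functional at `x`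
  have huniq : ∀ gr : E →L[ℝ] ℝ, (∀ w, gr w ≤ ‖w‖) → gr x = ‖x‖ → ∀ v, gr v = f v := by
    intro gr hle hgx
    have hmono : ∀ v, gr v ≤ f v := by
      intro v
      refine ge_of_tendsto (key v) ?_
      filter_upwards [self_mem_nhdsWithin] with t (ht : (0 : ℝ) < t)
      rw [le_div_iff₀ ht]
      have h1 : gr (x + t • v) ≤ ‖x + t • v‖ := hle _
      have h2 : gr (x + t • v) = ‖x‖ + t * gr v := by
        rw [map_add, map_smul, hgx, smul_eq_mul]
      linarith
    intro v
    have h1 := hmono v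
    have h2 := hmono (-v)
    rw [map_neg, map_neg] at h2
    linarith
  -- `f x = ‖x‖`
  have hfx : f x = ‖x‖ := by
    have h2 : HasDerivAt (fun t : ℝ => (1 + t) * ‖x‖) ‖x‖ 0 := by
      simpa using ((hasDerivAt_id (0 : ℝ)).const_add 1).mul_const ‖x‖
    have heq : (fun t : ℝ => ‖x + t • x‖) =ᶠ[𝓝 (0 : ℝ)] fun t : ℝ => (1 + t) * ‖x‖ := by
      filter_upwards [Ioo_mem_nhds (by norm_num : (-1 : ℝ) < 0) (by norm_num : (0 : ℝ) < 1)]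
        with t ht
      have hxx : x + t • x = (1 + t) • x := by rw [add_smul, one_smul]
      rw [hxx, norm_smul, Real.norm_eq_abs, abs_of_pos (by linarith [ht.1] : (0 : ℝ) < 1 + t)]
    exact (hline x).unique (h2.congr_of_eventuallyEq heq)
  -- parallelism transfers the norming property to every vector
  have hpar : ∀ y : E, ∃ l : 𝕜, ‖l‖ = 1 ∧ f (l • y) = ‖y‖ := by
    intro y
    obtain ⟨l, hl, hxy⟩ := h x y
    have hw0 : x + l • y ≠ 0 := by
      intro h0
      rw [h0, norm_zero] at hxy
      have := norm_nonneg y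
      have hxpos : (0 : ℝ) < ‖x‖ := norm_pos_iff.2 hx0
      linarith
    obtain ⟨g, hg1, hgx⟩ := exists_dual_vector 𝕜 (x + l • y) (norm_ne_zero_iff.2 hw0)
    set gr : E →L[ℝ] ℝ := (reCLM (K := 𝕜)).comp (g.restrictScalars ℝ) with hgr
    have hgrapp : ∀ w : E, gr w = re (g w) := fun w => rfl
    have hgrle : ∀ w : E, gr w ≤ ‖w‖ := by
      intro w
      calc gr w = re (g w) := rfl
        _ ≤ ‖g w‖ := re_le_norm _
        _ ≤ ‖g‖ * ‖w‖ := g.le_opNorm _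
        _ = ‖w‖ := by rw [hg1, one_mul]
    have hsum : gr x + gr (l • y) = ‖x‖ + ‖y‖ := by
      have : gr (x + l • y) = ‖x + l • y‖ := by
        rw [hgrapp, hgx, ofReal_re]
      rw [← map_add, this, hxy]
    have hly : ‖l • y‖ = ‖y‖ := by rw [norm_smul, hl, one_mul]
    have hgx' : gr x = ‖x‖ := by
      have h1 := hgrle x
      have h2 := hgrle (l • y)
      rw [hly] at h2
      linarith
    have hgy : gr (l • y) = ‖y‖ := by linarith
    exact ⟨l, hl, by rw [← huniq gr hgrle hgx' (l • y), hgy]⟩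
  -- extend `f` to a `𝕜`-linear functional
  set F : E →L[𝕜] 𝕜 := f.extendTo𝕜' with hF
  have hre : ∀ w : E, re (F w) = f w := fun w => f.toLinearMap.extendTo𝕜'_apply_re w
  refine ⟨F, fun y => le_antisymm ?_ ?_⟩
  · rcases eq_or_ne (F y) 0 with h0 | h0
    · rw [h0, norm_zero]; exact norm_nonneg y
    · set c : 𝕜 := ((‖F y‖ : ℝ) : 𝕜) / F y with hc
      have hc1 : ‖c‖ = 1 := by
        rw [hc, norm_div, norm_ofReal, abs_norm, div_self (norm_ne_zero_iff.2 h0)]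
      calc ‖F y‖ = re ((‖F y‖ : ℝ) : 𝕜) := (ofReal_re _).symm
        _ = re (c * F y) := by rw [hc, div_mul_cancel₀ _ h0]
        _ = re (F (c • y)) := by rw [map_smul, smul_eq_mul]
        _ = f (c • y) := hre _
        _ ≤ ‖c • y‖ := fle _
        _ = ‖y‖ := by rw [norm_smul, hc1, one_mul]
  · obtain ⟨l, hl, hfl⟩ := hpar y
    calc ‖y‖ = f (l • y) := hfl.symm
      _ = re (F (l • y)) := (hre _).symm
      _ = re (l * F y) := by rw [map_smul, smul_eq_mul]
      _ ≤ ‖l * F y‖ := re_le_norm _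
      _ = ‖F y‖ := by rw [norm_mul, hl, one_mul]

/-- A separable Banach space in which every pair of vectors is parallel has dimension at most 1. -/
theorem dim_le_one_of_all_parallel {𝕜 X : Type*} [RCLike 𝕜] [NormedAddCommGroup X]
    [NormedSpace 𝕜 X] [CompleteSpace X] [TopologicalSpace.SeparableSpace X]
    (h : ∀ x y : X, ∃ l : 𝕜, ‖l‖ = 1 ∧ ‖x + l • y‖ = ‖x‖ + ‖y‖) :
    Module.rank 𝕜 X ≤ 1 := by
  rw [rank_le_one_iff]
  by_contra hrank
  push_neg at hrank
  obtain ⟨u, hu⟩ : ∃ u : X, u ≠ 0 := by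
    by_contra h0
    push_neg at h0
    obtain ⟨v, hv⟩ := hrank 0
    exact hv 0 (by rw [h0 v, smul_zero])
  obtain ⟨v, hv⟩ := hrank u
  set Y : Submodule 𝕜 X := Submodule.span 𝕜 ({u, v} : Set X) with hY
  haveI : FiniteDimensional 𝕜 Y :=
    FiniteDimensional.span_of_finite 𝕜 ((Set.finite_singleton v).insert u)
  letI : NormedSpace ℝ Y := RestrictScalars.normedSpace ℝ 𝕜 Y
  letI : FiniteDimensional ℝ Y := FiniteDimensional.trans ℝ 𝕜 Y
  have hpar : ∀ x y : Y, ∃ l : 𝕜, ‖l‖ = 1 ∧ ‖x + l • y‖ = ‖x‖ + ‖y‖ := by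
    intro x y
    obtain ⟨l, hl, he⟩ := h (x : X) (y : X)
    refine ⟨l, hl, ?_⟩
    have hc : ((x + l • y : Y) : X) = (x : X) + l • (y : X) := by
      push_cast
      ring_nf
    calc ‖x + l • y‖ = ‖((x + l • y : Y) : X)‖ := rfl
      _ = ‖(x : X) + l • (y : X)‖ := by rw [hc]
      _ = ‖(x : X)‖ + ‖(y : X)‖ := he
      _ = ‖x‖ + ‖y‖ := rfl
  obtain ⟨F, hF⟩ := exists_isometric_functional hpar
  set uY : Y := ⟨u, Submodule.subset_span (Set.mem_insert u {v})⟩ with huY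
  set vY : Y := ⟨v, Submodule.subset_span (Set.mem_insert_of_mem u rfl)⟩ with hvY
  have hFu : F uY ≠ 0 := by
    intro h0
    have h1 := hF uY
    rw [h0, norm_zero] at h1
    have h5 : uY = 0 := norm_eq_zero.1 h1.symm
    exact hu (congrArg (Subtype.val : Y → X) h5)
  refine hv (F vY / F uY) ?_
  have h2 : F (vY - (F vY / F uY) • uY) = 0 := by
    rw [map_sub, map_smul, smul_eq_mul, div_mul_cancel₀ _ hFu, sub_self]
  have h3 : vY - (F vY / F uY) • uY = 0 := by
    have h4 := hF (vY - (F vY / F uY) • uY)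
    rw [h2, norm_zero] at h4
    exact norm_eq_zero.1 h4.symm
  have h5 : vY = (F vY / F uY) • uY := by
    rwa [sub_eq_zero] at h3
  have h6 := congrArg (Subtype.val : Y → X) h5
  simpa using h6.symm
end

section
/- Let A ∈ L(ℓ₁ⁿ, ℓ₁ᵐ) be a smooth point with ‖A‖ = 1. Then there exists a unique index j such that ‖Ae_j‖₁ = 1 and ‖Ae_i‖₁ < 1 for all i ≠ j; moreover, writing Ae_j = (c₁, …, c_m), all coordinates c_k are nonzero. -/
lemma l1_norm_eq {𝕜 : Type*} [RCLike 𝕜] {m : ℕ} (f : PiLp 1 (fun _ : Fin m => 𝕜)) :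
    ‖f‖ = ∑ i, ‖f i‖ := by
  rw [PiLp.norm_eq_sum (by norm_num)]
  simp

noncomputable def coordFunctional {𝕜 : Type*} [RCLike 𝕜] {m : ℕ} (g : Fin m → 𝕜)
    (hg : ∀ k, ‖g k‖ ≤ 1) :
    PiLp 1 (fun _ : Fin m => 𝕜) →L[𝕜] 𝕜 :=
  LinearMap.mkContinuous
    { toFun := fun y => ∑ k, g k * y k
      map_add' := by intro a b; simp [mul_add, Finset.sum_add_distrib]
      map_smul' := by intro c a; simp [Finset.mul_sum, mul_left_comm] }
    1 (by
      intro y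
      simp only [LinearMap.coe_mk, AddHom.coe_mk, one_mul]
      calc ‖∑ k, g k * y k‖ ≤ ∑ k, ‖g k * y k‖ := norm_sum_le _ _
        _ ≤ ∑ k, ‖y k‖ := by
            refine Finset.sum_le_sum fun k _ => ?_
            rw [norm_mul]
            calc ‖g k‖ * ‖y k‖ ≤ 1 * ‖y k‖ :=
              mul_le_mul_of_nonneg_right (hg k) (norm_nonneg _)
              _ = ‖y k‖ := one_mul _
        _ = ‖y‖ := (l1_norm_eq y).symm)

lemma coordFunctional_apply {𝕜 : Type*} [RCLike 𝕜] {m : ℕ} (g : Fin m → 𝕜)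
    (hg : ∀ k, ‖g k‖ ≤ 1) (y : PiLp 1 (fun _ : Fin m => 𝕜)) :
    coordFunctional g hg y = ∑ k, g k * y k := rfl

lemma coordFunctional_norm_le {𝕜 : Type*} [RCLike 𝕜] {m : ℕ} (g : Fin m → 𝕜)
    (hg : ∀ k, ‖g k‖ ≤ 1) : ‖coordFunctional g hg‖ ≤ 1 :=
  LinearMap.mkContinuous_norm_le _ zero_le_one _

lemma basis_decomp {𝕜 : Type*} [RCLike 𝕜] {n : ℕ} (x₀ : PiLp 1 (fun _ : Fin n => 𝕜)) :
    x₀ = ∑ j, x₀ j • (WithLp.equiv 1 (Fin n → 𝕜)).symm (Pi.single j 1) := by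
  have h1 : ∀ j, x₀ j • (WithLp.equiv 1 (Fin n → 𝕜)).symm (Pi.single j 1)
      = (WithLp.equiv 1 (Fin n → 𝕜)).symm (Pi.single j (x₀ j)) := by
    intro j
    apply (WithLp.equiv 1 (Fin n → 𝕜)).injective
    simp only [WithLp.equiv_apply, WithLp.equiv_symm_apply, WithLp.ofLp_smul, WithLp.ofLp_toLp]
    rw [← Pi.single_smul', smul_eq_mul, mul_one]
  rw [Finset.sum_congr rfl fun j _ => h1 j]
  have h2 : (∑ j, (WithLp.equiv 1 (Fin n → 𝕜)).symm (Pi.single j (x₀ j)))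
      = (WithLp.linearEquiv 1 𝕜 (Fin n → 𝕜)).symm (∑ j, Pi.single j (x₀ j)) := by
    rw [map_sum]; rfl
  rw [h2, Finset.univ_sum_single]
  rfl

/-- A smooth norm-one operator `A : ℓ₁ⁿ → ℓ₁ᵐ` attains its norm at exactly one coordinate
direction `e_j`, and `A e_j` has all coordinates nonzero. -/
theorem smooth_operator_structure {𝕜 : Type*} [RCLike 𝕜] {n m : ℕ}
    (A : PiLp 1 (fun _ : Fin n => 𝕜) →L[𝕜] PiLp 1 (fun _ : Fin m => 𝕜)) (hA : ‖A‖ = 1)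
    (x₀ : PiLp 1 (fun _ : Fin n => 𝕜)) (hx₀ : ‖x₀‖ = 1)
    (hM : {x : PiLp 1 (fun _ : Fin n => 𝕜) | ‖x‖ = 1 ∧ ‖A x‖ = ‖A‖} =
      {x : PiLp 1 (fun _ : Fin n => 𝕜) | ∃ α : 𝕜, ‖α‖ = 1 ∧ x = α • x₀})
    (hsm : ∃! f : PiLp 1 (fun _ : Fin m => 𝕜) →L[𝕜] 𝕜, ‖f‖ = 1 ∧ f (A x₀) = (‖A x₀‖ : 𝕜)) :
    ∃ j : Fin n,
      ‖A ((WithLp.equiv 1 (Fin n → 𝕜)).symm (Pi.single j 1))‖ = 1 ∧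
      (∀ i : Fin n, i ≠ j → ‖A ((WithLp.equiv 1 (Fin n → 𝕜)).symm (Pi.single i 1))‖ < 1) ∧
      (∀ k : Fin m,
        WithLp.equiv 1 (Fin m → 𝕜) (A ((WithLp.equiv 1 (Fin n → 𝕜)).symm (Pi.single j 1))) k ≠ 0) := by
  classical
  set e : Fin n → PiLp 1 (fun _ : Fin n => 𝕜) :=
    fun j => (WithLp.equiv 1 (Fin n → 𝕜)).symm (Pi.single j 1) with he_def
  have he : ∀ j, ‖e j‖ = 1 := by
    intro j
    simp [he_def, PiLp.norm_toLp_single]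
  -- coordinates of e j
  have he_coord : ∀ j i, (e j) i = (Pi.single j (1:𝕜) : Fin n → 𝕜) i := fun _ _ => rfl
  -- x₀ is norm attaining
  have hAx₀ : ‖A x₀‖ = 1 := by
    have : x₀ ∈ {x : PiLp 1 (fun _ : Fin n => 𝕜) | ∃ α : 𝕜, ‖α‖ = 1 ∧ x = α • x₀} :=
      ⟨1, by simp⟩
    rw [← hM] at this
    rw [this.2, hA]
  have hle : ∀ i, ‖A (e i)‖ ≤ 1 := by
    intro i
    calc ‖A (e i)‖ ≤ ‖A‖ * ‖e i‖ := A.le_opNorm _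
      _ = 1 := by rw [hA, he i, one_mul]
  -- there is j with x₀ j ≠ 0 and ‖A (e j)‖ = 1
  have hexists : ∃ j, x₀ j ≠ 0 ∧ ‖A (e j)‖ = 1 := by
    by_contra hcon
    push_neg at hcon
    have hlt : ∀ j, x₀ j ≠ 0 → ‖A (e j)‖ < 1 := fun j hj =>
      lt_of_le_of_ne (hle j) (hcon j hj)
    have hx0ne : x₀ ≠ 0 := by
      intro h; rw [h, norm_zero] at hx₀; exact zero_ne_one hx₀
    obtain ⟨i₀, hi₀⟩ : ∃ i, x₀ i ≠ 0 := by
      by_contra h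
      push_neg at h
      apply hx0ne
      apply (WithLp.equiv 1 (Fin n → 𝕜)).injective
      funext i
      exact h i
    have hdec := basis_decomp x₀
    have hbound : ‖A x₀‖ ≤ ∑ j, ‖x₀ j‖ * ‖A (e j)‖ := by
      conv_lhs => rw [hdec]
      rw [map_sum]
      refine (norm_sum_le _ _).trans_eq ?_
      refine Finset.sum_congr rfl fun j _ => ?_
      rw [map_smul, norm_smul]
    have hstrict : ∑ j, ‖x₀ j‖ * ‖A (e j)‖ < ∑ j, ‖x₀ j‖ := by
      refine Finset.sum_lt_sum (fun j _ => ?_) ⟨i₀, Finset.mem_univ _, ?_⟩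
      · by_cases hj : x₀ j = 0
        · simp [hj]
        · calc ‖x₀ j‖ * ‖A (e j)‖ ≤ ‖x₀ j‖ * 1 :=
            mul_le_mul_of_nonneg_left (hle j) (norm_nonneg _)
            _ = ‖x₀ j‖ := mul_one _
      · have h := mul_lt_mul_of_pos_left (hlt i₀ hi₀) (norm_pos_iff.mpr hi₀)
        simpa using h
    have : ‖A x₀‖ < 1 := by
      calc ‖A x₀‖ ≤ ∑ j, ‖x₀ j‖ * ‖A (e j)‖ := hbound
        _ < ∑ j, ‖x₀ j‖ := hstrict
        _ = ‖x₀‖ := (l1_norm_eq x₀).symm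
        _ = 1 := hx₀
    exact absurd hAx₀ this.ne
  obtain ⟨j, hj0, hj⟩ := hexists
  -- e j is in the norm attaining set, hence proportional to x₀
  have hej_mem : e j ∈ {x : PiLp 1 (fun _ : Fin n => 𝕜) | ‖x‖ = 1 ∧ ‖A x‖ = ‖A‖} :=
    ⟨he j, by rw [hj, hA]⟩
  rw [hM] at hej_mem
  obtain ⟨α, hα, hαe⟩ := hej_mem
  have hα0 : α ≠ 0 := by
    intro h; rw [h, norm_zero] at hα; exact zero_ne_one hα
  have hx₀e : x₀ = α⁻¹ • e j := by
    rw [hαe, smul_smul, inv_mul_cancel₀ hα0, one_smul]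
  refine ⟨j, hj, ?_, ?_⟩
  · -- uniqueness
    intro i hij
    refine lt_of_le_of_ne (hle i) ?_
    intro heq
    have hei_mem : e i ∈ {x : PiLp 1 (fun _ : Fin n => 𝕜) | ‖x‖ = 1 ∧ ‖A x‖ = ‖A‖} :=
      ⟨he i, by rw [heq, hA]⟩
    rw [hM] at hei_mem
    obtain ⟨β, hβ, hβe⟩ := hei_mem
    have : (e i) i = (β * α⁻¹) * (e j) i := by
      rw [hβe, hx₀e, smul_smul]
      rfl
    rw [he_coord, he_coord, Pi.single_eq_same, Pi.single_eq_of_ne hij, mul_zero] at this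
    exact one_ne_zero this
  · -- all coordinates of A (e j) nonzero
    intro k
    -- A (e j) = α • A x₀
    have hAej : A (e j) = α • A x₀ := by rw [hαe, map_smul]
    have hcoord : (WithLp.equiv 1 (Fin m → 𝕜)) (A (e j)) k = α * (A x₀) k := by
      rw [hAej]; rfl
    rw [hcoord]
    refine mul_ne_zero hα0 ?_
    -- it suffices that all coordinates of A x₀ are nonzero
    intro hk0
    set c : PiLp 1 (fun _ : Fin m => 𝕜) := A x₀ with hc
    -- two distinct norming functionals
    set g₀ : Fin m → 𝕜 := fun l => if c l = 0 then 0 else (starRingEnd 𝕜 (c l)) / ‖c l‖ with hg₀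
    set g₁ : Fin m → 𝕜 := fun l => if l = k then 1 else g₀ l with hg₁
    have hnorm_g₀ : ∀ l, ‖g₀ l‖ ≤ 1 := by
      intro l
      rw [hg₀]
      by_cases h : c l = 0
      · simp [h]
      · simp only [h, if_false]
        rw [norm_div, RCLike.norm_conj, RCLike.norm_ofReal, abs_of_nonneg (norm_nonneg _),
          div_self (norm_ne_zero_iff.mpr h)]
    have hnorm_g₁ : ∀ l, ‖g₁ l‖ ≤ 1 := by
      intro l
      rw [hg₁]
      by_cases h : l = k
      · simp [h]
      · simp only [h, if_false]; exact hnorm_g₀ l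
    have hval : ∀ l, g₀ l * c l = (‖c l‖ : 𝕜) := by
      intro l
      rw [hg₀]
      by_cases h : c l = 0
      · simp [h]
      · simp only [h, if_false]
        rw [div_mul_eq_mul_div, RCLike.conj_mul]
        rw [← RCLike.ofReal_pow, ← RCLike.ofReal_div, sq,
          mul_div_assoc, div_self (by exact_mod_cast norm_ne_zero_iff.mpr h), mul_one]
    have hval₁ : ∀ l, g₁ l * c l = (‖c l‖ : 𝕜) := by
      intro l
      rw [hg₁]
      by_cases h : l = k
      · subst h; simp [hk0]
      · simp only [h, if_false]; exact hval l
    have happly : ∀ (g : Fin m → 𝕜) (hg : ∀ l, ‖g l‖ ≤ 1), (∀ l, g l * c l = (‖c l‖ : 𝕜)) →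
        coordFunctional g hg c = (‖c‖ : 𝕜) := by
      intro g hg hgv
      rw [coordFunctional_apply, Finset.sum_congr rfl fun l _ => hgv l, l1_norm_eq]
      push_cast
      rfl
    have hcnorm : ‖c‖ = 1 := hAx₀
    have hnorm_eq : ∀ (g : Fin m → 𝕜) (hg : ∀ l, ‖g l‖ ≤ 1),
        coordFunctional g hg c = (‖c‖ : 𝕜) → ‖coordFunctional g hg‖ = 1 := by
      intro g hg hgc
      refine le_antisymm (coordFunctional_norm_le g hg) ?_
      have h1 : ‖coordFunctional g hg c‖ = 1 := by
        rw [hgc, RCLike.norm_ofReal, abs_of_nonneg (norm_nonneg _), hcnorm]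
      have h2 : ‖coordFunctional g hg c‖ ≤ ‖coordFunctional g hg‖ * ‖c‖ :=
        (coordFunctional g hg).le_opNorm _
      rw [h1, hcnorm, mul_one] at h2
      exact h2
    have h₀c := happly g₀ hnorm_g₀ hval
    have h₁c := happly g₁ hnorm_g₁ hval₁
    obtain ⟨f, _, hfuniq⟩ := hsm
    have heq₀ : coordFunctional g₀ hnorm_g₀ = f :=
      hfuniq _ ⟨hnorm_eq g₀ hnorm_g₀ h₀c, h₀c⟩
    have heq₁ : coordFunctional g₁ hnorm_g₁ = f :=
      hfuniq _ ⟨hnorm_eq g₁ hnorm_g₁ h₁c, h₁c⟩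
    have heq : coordFunctional g₀ hnorm_g₀ = coordFunctional g₁ hnorm_g₁ :=
      heq₀.trans heq₁.symm
    -- evaluate at e_k in the codomain
    have heval : g₀ k = g₁ k := by
      have h := congrArg (fun f => f ((WithLp.equiv 1 (Fin m → 𝕜)).symm (Pi.single k 1))) heq
      simp only [coordFunctional_apply] at h
      have hs : ∀ (g : Fin m → 𝕜),
          (∑ l, g l * ((WithLp.equiv 1 (Fin m → 𝕜)).symm (Pi.single k (1:𝕜))) l) = g k := by
        intro g
        rw [Finset.sum_eq_single k]
        · show g k * (Pi.single k (1:𝕜) : Fin m → 𝕜) k = g k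
          rw [Pi.single_eq_same, mul_one]
        · intro l _ hl
          show g l * (Pi.single k (1:𝕜) : Fin m → 𝕜) l = 0
          rw [Pi.single_eq_of_ne hl, mul_zero]
        · intro h; exact absurd (Finset.mem_univ k) h
      rw [hs g₀, hs g₁] at h
      exact h
    rw [hg₁] at heval
    simp only [if_pos rfl] at heval
    rw [hg₀] at heval
    simp only [hk0] at heval
    exact absurd heval (by norm_num)
end

section
/- Let T : L(ℓ₁ⁿ, ℓ₁ᵐ) → L(ℓ₁ⁿ, ℓ₁ᵐ) be a linear map preserving TEA pairs, and suppose there is A ∈ ker(T) whose norm-attaining set is M_A = {αe_j : |α| = 1} for some index j. Then T = 0. -/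
open Finset

namespace TEAAux

variable {𝕜 : Type*} [RCLike 𝕜] {n m : ℕ}

noncomputable def e (n : ℕ) (i : Fin n) : PiLp 1 (fun _ : Fin n => 𝕜) :=
  (WithLp.equiv 1 (Fin n → 𝕜)).symm (Pi.single i 1)

lemma norm_e (i : Fin n) : ‖(e n i : PiLp 1 (fun _ : Fin n => 𝕜))‖ = 1 := by
  simp [e]

lemma e_apply (i k : Fin n) :
    (e n i : PiLp 1 (fun _ : Fin n => 𝕜)) k = Pi.single (M := fun _ : Fin n => 𝕜) i 1 k := rfl

lemma l1_norm_eq (x : PiLp 1 (fun _ : Fin n => 𝕜)) : ‖x‖ = ∑ i, ‖x i‖ := by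
  rw [PiLp.norm_eq_sum (by norm_num)]
  simp

lemma sum_apply' (f : Fin n → PiLp 1 (fun _ : Fin n => 𝕜)) (k : Fin n) :
    (∑ i, f i : PiLp 1 (fun _ : Fin n => 𝕜)) k = ∑ i, f i k := by
  calc (∑ i, f i : PiLp 1 (fun _ : Fin n => 𝕜)) k
      = (WithLp.linearEquiv 1 𝕜 (Fin n → 𝕜) (∑ i, f i)) k := rfl
    _ = (∑ i, WithLp.linearEquiv 1 𝕜 (Fin n → 𝕜) (f i)) k := by
        rw [map_sum]
    _ = ∑ i, (WithLp.linearEquiv 1 𝕜 (Fin n → 𝕜) (f i)) k := Finset.sum_apply _ _ _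
    _ = ∑ i, f i k := rfl

lemma decomp (x : PiLp 1 (fun _ : Fin n => 𝕜)) : x = ∑ i, x i • e n i := by
  refine PiLp.ext fun k => ?_
  rw [show ((∑ i, x i • e n i : PiLp 1 (fun _ : Fin n => 𝕜)) k) = ∑ i, x i * Pi.single (M := fun _ : Fin n => 𝕜) i 1 k from ?_]
  · simp [Pi.single_apply]
  · rw [sum_apply']
    congr 1


lemma col_le (X : PiLp 1 (fun _ : Fin n => 𝕜) →L[𝕜] PiLp 1 (fun _ : Fin m => 𝕜)) (i : Fin n) :
    ‖X (e n i)‖ ≤ ‖X‖ := by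
  simpa [norm_e] using X.le_opNorm (e n i)

lemma opNorm_le_of_cols (X : PiLp 1 (fun _ : Fin n => 𝕜) →L[𝕜] PiLp 1 (fun _ : Fin m => 𝕜))
    {C : ℝ} (hC : 0 ≤ C) (h : ∀ i, ‖X (e n i)‖ ≤ C) : ‖X‖ ≤ C := by
  refine X.opNorm_le_bound hC fun x => ?_
  calc ‖X x‖ = ‖∑ i, x i • X (e n i)‖ := by
        conv_lhs => rw [decomp x]
        rw [map_sum]
        simp
    _ ≤ ∑ i, ‖x i • X (e n i)‖ := norm_sum_le _ _
    _ ≤ ∑ i, ‖x i‖ * C := by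
        refine Finset.sum_le_sum fun i _ => ?_
        rw [norm_smul]
        exact mul_le_mul_of_nonneg_left (h i) (norm_nonneg _)
    _ = C * ‖x‖ := by rw [l1_norm_eq x, ← Finset.sum_mul, mul_comm]

noncomputable def coord (k : Fin n) : PiLp 1 (fun _ : Fin n => 𝕜) →L[𝕜] 𝕜 :=
  LinearMap.toContinuousLinearMap
    ((LinearMap.proj k).comp (WithLp.linearEquiv 1 𝕜 (Fin n → 𝕜)).toLinearMap)

lemma coord_apply (k : Fin n) (x : PiLp 1 (fun _ : Fin n => 𝕜)) : coord k x = x k := rfl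

noncomputable def rankOne (b : PiLp 1 (fun _ : Fin m => 𝕜)) (k : Fin n) :
    PiLp 1 (fun _ : Fin n => 𝕜) →L[𝕜] PiLp 1 (fun _ : Fin m => 𝕜) :=
  (coord k).smulRight b

lemma rankOne_col (b : PiLp 1 (fun _ : Fin m => 𝕜)) (k i : Fin n) :
    rankOne b k (e n i) = if i = k then b else 0 := by
  rw [rankOne, ContinuousLinearMap.smulRight_apply, coord_apply, e_apply, Pi.single_apply]
  rcases eq_or_ne i k with h | h
  · simp [h]
  · simp [h, Ne.symm h]

lemma norm_rankOne (b : PiLp 1 (fun _ : Fin m => 𝕜)) (k : Fin n) : ‖rankOne b k‖ = ‖b‖ := by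
  refine le_antisymm (opNorm_le_of_cols _ (norm_nonneg b) fun i => ?_) ?_
  · rw [rankOne_col]; split
    · rfl
    · simp
  · have := col_le (rankOne b k) k
    rwa [rankOne_col, if_pos rfl] at this

lemma kill
    (T : (PiLp 1 (fun _ : Fin n => 𝕜) →L[𝕜] PiLp 1 (fun _ : Fin m => 𝕜)) →ₗ[𝕜]
      (PiLp 1 (fun _ : Fin n => 𝕜) →L[𝕜] PiLp 1 (fun _ : Fin m => 𝕜)))
    (hT : ∀ X Y : PiLp 1 (fun _ : Fin n => 𝕜) →L[𝕜] PiLp 1 (fun _ : Fin m => 𝕜),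
      ‖X + Y‖ = ‖X‖ + ‖Y‖ → ‖T X + T Y‖ = ‖T X‖ + ‖T Y‖)
    (A' : PiLp 1 (fun _ : Fin n => 𝕜) →L[𝕜] PiLp 1 (fun _ : Fin m => 𝕜))
    (hA' : T A' = 0) (k : Fin n) (c : ℝ) (hc : 0 ≤ c)
    (hk : ‖A' (e n k)‖ = ‖A'‖) (hpos : 0 < ‖A'‖)
    (hdom : ∀ i, i ≠ k → ‖A' (e n i)‖ < ‖A'‖)
    (X : PiLp 1 (fun _ : Fin n => 𝕜) →L[𝕜] PiLp 1 (fun _ : Fin m => 𝕜))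
    (hX : X (e n k) = (c : 𝕜) • A' (e n k)) : T X = 0 := by
  set a := ‖A'‖ with has
  obtain ⟨lam, hlamc, hlam0, key⟩ : ∃ lam : ℝ, c ≤ lam ∧ 0 ≤ lam ∧
      ∀ i, i ≠ k → ‖X (e n i)‖ + lam * ‖A' (e n i)‖ ≤ lam * a - c * a := by
    refine ⟨c + ∑ i, max 0 ((‖X (e n i)‖ + c * a) / (a - ‖A' (e n i)‖)), ?_, ?_, ?_⟩
    · exact le_add_of_nonneg_right (Finset.sum_nonneg fun i _ => le_max_left _ _)
    · exact hc.trans (le_add_of_nonneg_right (Finset.sum_nonneg fun i _ => le_max_left _ _))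
    · intro i hi
      have hd : 0 < a - ‖A' (e n i)‖ := sub_pos.mpr (hdom i hi)
      have h1 : (‖X (e n i)‖ + c * a) / (a - ‖A' (e n i)‖)
          ≤ c + ∑ i, max 0 ((‖X (e n i)‖ + c * a) / (a - ‖A' (e n i)‖)) := by
        refine le_trans (le_max_right 0 _) ?_
        refine le_trans (Finset.single_le_sum
          (f := fun i => max 0 ((‖X (e n i)‖ + c * a) / (a - ‖A' (e n i)‖)))
          (fun i _ => le_max_left _ _) (Finset.mem_univ i)) ?_
        exact le_add_of_nonneg_left hc
      have h2 := mul_le_mul_of_nonneg_right h1 hd.le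
      rw [div_mul_cancel₀ _ hd.ne', mul_sub] at h2
      linarith
  set Y := X + ((lam : ℝ) : 𝕜) • A' with hYdef
  set Z := ((lam : ℝ) : 𝕜) • A' - X with hZdef
  have hYk : Y (e n k) = ((c + lam : ℝ) : 𝕜) • A' (e n k) := by
    rw [hYdef]
    simp only [ContinuousLinearMap.add_apply, ContinuousLinearMap.coe_smul', Pi.smul_apply]
    rw [hX, RCLike.ofReal_add, add_smul]
  have hnYk : ‖Y (e n k)‖ = (c + lam) * a := by
    rw [hYk, norm_smul, RCLike.norm_ofReal, abs_of_nonneg (by linarith), hk]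
  have hZk : Z (e n k) = ((lam - c : ℝ) : 𝕜) • A' (e n k) := by
    rw [hZdef]
    simp only [ContinuousLinearMap.sub_apply, ContinuousLinearMap.coe_smul', Pi.smul_apply]
    rw [hX, RCLike.ofReal_sub, sub_smul]
  have hnZk : ‖Z (e n k)‖ = (lam - c) * a := by
    rw [hZk, norm_smul, RCLike.norm_ofReal, abs_of_nonneg (by linarith), hk]
  have hca : 0 ≤ c * a := mul_nonneg hc hpos.le
  have hYnorm : ‖Y‖ = (c + lam) * a := by
    refine le_antisymm (opNorm_le_of_cols _ (mul_nonneg (by linarith) hpos.le) fun i => ?_) ?_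
    · rcases eq_or_ne i k with rfl | hi
      · exact hnYk.le
      · calc ‖Y (e n i)‖ ≤ ‖X (e n i)‖ + lam * ‖A' (e n i)‖ := by
              rw [hYdef]
              simp only [ContinuousLinearMap.add_apply, ContinuousLinearMap.coe_smul',
                Pi.smul_apply]
              refine (norm_add_le _ _).trans ?_
              rw [norm_smul, RCLike.norm_ofReal, abs_of_nonneg hlam0]
          _ ≤ lam * a - c * a := key i hi
          _ ≤ (c + lam) * a := by rw [add_mul]; linarith
    · rw [← hnYk]; exact col_le Y k
  have hZnorm : ‖Z‖ = (lam - c) * a := by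
    refine le_antisymm (opNorm_le_of_cols _ (mul_nonneg (by linarith) hpos.le) fun i => ?_) ?_
    · rcases eq_or_ne i k with rfl | hi
      · exact hnZk.le
      · calc ‖Z (e n i)‖ ≤ lam * ‖A' (e n i)‖ + ‖X (e n i)‖ := by
              rw [hZdef]
              simp only [ContinuousLinearMap.sub_apply, ContinuousLinearMap.coe_smul',
                Pi.smul_apply]
              refine (norm_sub_le _ _).trans ?_
              rw [norm_smul, RCLike.norm_ofReal, abs_of_nonneg hlam0]
          _ ≤ lam * a - c * a := by linarith [key i hi]
          _ = (lam - c) * a := by ring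
    · rw [← hnZk]; exact col_le Z k
  have hYZk : (Y + Z) (e n k) = ((2 * lam : ℝ) : 𝕜) • A' (e n k) := by
    rw [ContinuousLinearMap.add_apply, hYk, hZk, ← add_smul, ← RCLike.ofReal_add,
      show (c + lam) + (lam - c) = 2 * lam by ring]
  have hnYZk : ‖(Y + Z) (e n k)‖ = 2 * lam * a := by
    rw [hYZk, norm_smul, RCLike.norm_ofReal, abs_of_nonneg (by linarith), hk]
  have htri : ‖Y + Z‖ = ‖Y‖ + ‖Z‖ := by
    refine le_antisymm (norm_add_le Y Z) ?_
    rw [hYnorm, hZnorm]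
    calc (c + lam) * a + (lam - c) * a = 2 * lam * a := by ring
      _ = ‖(Y + Z) (e n k)‖ := hnYZk.symm
      _ ≤ ‖Y + Z‖ := col_le _ k
  have h2 := hT Y Z htri
  have hsz : ((lam : ℝ) : 𝕜) • (0 : (PiLp 1 (fun _ : Fin n => 𝕜) →L[𝕜]
      PiLp 1 (fun _ : Fin m => 𝕜))) = 0 := by
    ext x
    rw [ContinuousLinearMap.smul_apply, ContinuousLinearMap.zero_apply, smul_zero]
  have hTY : T Y = T X := by rw [hYdef, map_add, map_smul, hA', hsz, add_zero]
  have hTZ : T Z = - T X := by rw [hZdef, map_sub, map_smul, hA', hsz, zero_sub]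
  rw [hTY, hTZ, add_neg_cancel, norm_zero, norm_neg] at h2
  have : ‖T X‖ = 0 := by linarith
  exact norm_eq_zero.mp this

end TEAAux

/-- If a linear map `T` on `L(ℓ₁ⁿ, ℓ₁ᵐ)` preserves TEA pairs and its kernel contains an operator
`A` whose norm-attaining set is exactly `{α e_j : |α| = 1}`, then `T = 0`. -/
theorem TEA_preserver_with_special_kernel_is_zero {𝕜 : Type*} [RCLike 𝕜] {n m : ℕ}
    (hn : 2 ≤ n) (hm : 2 ≤ m)
    (T : (PiLp 1 (fun _ : Fin n => 𝕜) →L[𝕜] PiLp 1 (fun _ : Fin m => 𝕜)) →ₗ[𝕜]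
      (PiLp 1 (fun _ : Fin n => 𝕜) →L[𝕜] PiLp 1 (fun _ : Fin m => 𝕜)))
    (hT : ∀ X Y : PiLp 1 (fun _ : Fin n => 𝕜) →L[𝕜] PiLp 1 (fun _ : Fin m => 𝕜),
      ‖X + Y‖ = ‖X‖ + ‖Y‖ → ‖T X + T Y‖ = ‖T X‖ + ‖T Y‖)
    (A : PiLp 1 (fun _ : Fin n => 𝕜) →L[𝕜] PiLp 1 (fun _ : Fin m => 𝕜)) (hA : T A = 0)
    (j : Fin n)
    (hMA : {x : PiLp 1 (fun _ : Fin n => 𝕜) | ‖x‖ = 1 ∧ ‖A x‖ = ‖A‖} =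
      {x : PiLp 1 (fun _ : Fin n => 𝕜) | ∃ α : 𝕜, ‖α‖ = 1 ∧
        x = α • (WithLp.equiv 1 (Fin n → 𝕜)).symm (Pi.single j 1)}) :
    T = 0 := by
  classical
  have hset := Set.ext_iff.mp hMA
  -- evaluating the purported identity `e i = α • e j` at coordinate `i ≠ j` is absurd
  have hne : ∀ i : Fin n, i ≠ j → ¬ (∃ α : 𝕜, ‖α‖ = 1 ∧
      (TEAAux.e n i : PiLp 1 (fun _ : Fin n => 𝕜)) =
        α • (WithLp.equiv 1 (Fin n → 𝕜)).symm (Pi.single j 1)) := by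
    rintro i hij ⟨α, -, hαe⟩
    have h1 : (TEAAux.e n i : PiLp 1 (fun _ : Fin n => 𝕜)) i = (1 : 𝕜) := by
      rw [TEAAux.e_apply, Pi.single_eq_same]
    have h2 : (α • (WithLp.equiv 1 (Fin n → 𝕜)).symm (Pi.single j 1) :
        PiLp 1 (fun _ : Fin n => 𝕜)) i = 0 := by
      show α • (TEAAux.e n j : PiLp 1 (fun _ : Fin n => 𝕜)) i = 0
      rw [TEAAux.e_apply, Pi.single_eq_of_ne hij, smul_zero]
    rw [hαe, h2] at h1
    exact one_ne_zero h1.symm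
  -- membership of `e j` in the norm-attaining set
  have hmemj : ‖(TEAAux.e n j : PiLp 1 (fun _ : Fin n => 𝕜))‖ = 1 ∧
      ‖A (TEAAux.e n j)‖ = ‖A‖ :=
    (hset (TEAAux.e n j)).mpr ⟨1, by simp, (one_smul _ _).symm⟩
  have hAj : ‖A (TEAAux.e n j)‖ = ‖A‖ := hmemj.2
  -- A ≠ 0, hence ‖A‖ > 0
  have hkj' : ∃ k : Fin n, k ≠ j := by
    by_cases h : (j : ℕ) = 0
    · refine ⟨⟨1, by omega⟩, fun hc => ?_⟩
      have h1 : (1 : ℕ) = (j : ℕ) := congrArg Fin.val hc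
      omega
    · refine ⟨⟨0, by omega⟩, fun hc => ?_⟩
      have h1 : (0 : ℕ) = (j : ℕ) := congrArg Fin.val hc
      omega
  obtain ⟨k, hkj⟩ := hkj'
  have hA0 : A ≠ 0 := by
    intro h0
    refine hne k hkj ((hset (TEAAux.e n k)).mp ⟨TEAAux.norm_e k, ?_⟩)
    rw [h0]
    simp
  have hpos : 0 < ‖A‖ := by
    rcases eq_or_lt_of_le (norm_nonneg A) with h0 | h
    · exact absurd (ContinuousLinearMap.ext fun x => by
        rw [ContinuousLinearMap.zero_apply]
        refine norm_le_zero_iff.mp ?_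
        have := A.le_opNorm x
        rw [← h0, zero_mul] at this
        exact this) hA0
    · exact h
  -- strict dominance of column j
  have hdom : ∀ i : Fin n, i ≠ j → ‖A (TEAAux.e n i)‖ < ‖A‖ := by
    intro i hij
    rcases lt_or_eq_of_le (TEAAux.col_le A i) with h | h
    · exact h
    · exact absurd ((hset (TEAAux.e n i)).mp ⟨TEAAux.norm_e i, h⟩) (hne i hij)
  -- Step 1 : every operator vanishing on e j is killed by T
  have step1 : ∀ B : PiLp 1 (fun _ : Fin n => 𝕜) →L[𝕜] PiLp 1 (fun _ : Fin m => 𝕜),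
      B (TEAAux.e n j) = 0 → T B = 0 := by
    intro B hB
    refine TEAAux.kill T hT A hA j 0 le_rfl hAj hpos hdom B ?_
    rw [hB, RCLike.ofReal_zero, zero_smul]
  -- Step 2 : every operator is killed by T
  have step2 : ∀ X : PiLp 1 (fun _ : Fin n => 𝕜) →L[𝕜] PiLp 1 (fun _ : Fin m => 𝕜),
      T X = 0 := by
    intro X
    by_cases hb : X (TEAAux.e n k) = 0
    · set f0 : PiLp 1 (fun _ : Fin m => 𝕜) :=
        (WithLp.equiv 1 (Fin m → 𝕜)).symm (Pi.single ⟨0, by omega⟩ 1) with hf0def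
      have hf0 : ‖f0‖ = 1 := by simp [hf0def]
      have hRn : ‖TEAAux.rankOne f0 k‖ = 1 := by rw [TEAAux.norm_rankOne, hf0]
      have hRk : TEAAux.rankOne f0 k (TEAAux.e n k) = f0 := by
        rw [TEAAux.rankOne_col, if_pos rfl]
      refine TEAAux.kill T hT (TEAAux.rankOne f0 k)
        (step1 _ (by rw [TEAAux.rankOne_col, if_neg hkj.symm])) k 0 le_rfl ?_ ?_ ?_ X ?_
      · rw [hRk, hf0, hRn]
      · rw [hRn]; exact one_pos
      · intro i hik
        rw [TEAAux.rankOne_col, if_neg hik, norm_zero, hRn]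
        exact one_pos
      · rw [hb, RCLike.ofReal_zero, zero_smul]
    · have hRn : ‖TEAAux.rankOne (X (TEAAux.e n k)) k‖ = ‖X (TEAAux.e n k)‖ :=
        TEAAux.norm_rankOne _ _
      have hRk : TEAAux.rankOne (X (TEAAux.e n k)) k (TEAAux.e n k) = X (TEAAux.e n k) := by
        rw [TEAAux.rankOne_col, if_pos rfl]
      refine TEAAux.kill T hT (TEAAux.rankOne (X (TEAAux.e n k)) k)
        (step1 _ (by rw [TEAAux.rankOne_col, if_neg hkj.symm])) k 1 zero_le_one ?_ ?_ ?_ X ?_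
      · rw [hRk, hRn]
      · rw [hRn]; exact norm_pos_iff.mpr hb
      · intro i hik
        rw [TEAAux.rankOne_col, if_neg hik, norm_zero, hRn]
        exact norm_pos_iff.mpr hb
      · rw [hRk, RCLike.ofReal_one, one_smul]
  exact LinearMap.ext fun X => (step2 X).trans (LinearMap.zero_apply X).symm
end
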